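/- Let f be the Fibonacci sequence with f_0 = f_1 = 1. The infinite matrices F̂ = (f̂_{nk}) with f̂_{n,n−1} = −f_{n+1}/f_n, f̂_{nn} = f_n/f_{n+1}, f̂_{nk} = 0 otherwise, and G = (g_{nk}) with g_{nk} = f_{n+1}²/(f_k f_{k+1}) for 0 ≤ k ≤ n and 0 otherwise, are mutually inverse lower-triangular matrices: (F̂G)_{nm} = δ_{nm} and (GF̂)_{nm} = δ_{nm} for all n, m ∈ ℕ. -/

import Mathlib

open Filter Topology

def fibo : ℕ → ℕ
  | 0 => 1
  | 1 => 1
  | n + 2 => fibo (n + 1) + fibo n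

noncomputable def Fhat (x : ℕ → ℝ) : ℕ → ℝ
  | 0 => (fibo 0 : ℝ) / fibo 1 * x 0
  | k + 1 => (fibo (k + 1) : ℝ) / fibo (k + 2) * x (k + 1)
      - (fibo (k + 2) : ℝ) / fibo (k + 1) * x k

noncomputable def xseq (y : ℕ → ℝ) (k : ℕ) : ℝ :=
  ∑ j ∈ Finset.range (k + 1), ((fibo (k + 1) : ℝ) ^ 2 / ((fibo j : ℝ) * fibo (j + 1))) * y j

noncomputable def Fmat (n k : ℕ) : ℝ :=
  if k + 1 = n then -((fibo (n + 1) : ℝ) / fibo n)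
  else if k = n then (fibo n : ℝ) / fibo (n + 1)
  else 0

noncomputable def Gmat (n k : ℕ) : ℝ :=
  if k ≤ n then (fibo (n + 1) : ℝ) ^ 2 / ((fibo k : ℝ) * fibo (k + 1)) else 0

lemma fibo_pos : ∀ n, 0 < fibo n
  | 0 => by simp [fibo]
  | 1 => by simp [fibo]
  | n + 2 => by rw [fibo]; exact Nat.add_pos_left (fibo_pos (n + 1)) _

lemma fibo_ne (n : ℕ) : (fibo n : ℝ) ≠ 0 := by
  exact_mod_cast (fibo_pos n).ne'

theorem Fmat_Gmat_inverse (n m : ℕ) :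
    (∑ j ∈ Finset.range (n + 1), Fmat n j * Gmat j m) = (if n = m then 1 else 0) ∧
    (∑ j ∈ Finset.range (n + 1), Gmat n j * Fmat j m) = (if n = m then 1 else 0) := by
  constructor
  · -- F * G
    cases n with
    | zero =>
      rw [Finset.range_one, Finset.sum_singleton]
      rcases Nat.eq_zero_or_pos m with rfl | hm
      · norm_num [Fmat, Gmat, fibo]
      · have h0 : Gmat 0 m = 0 := by unfold Gmat; rw [if_neg (by omega : ¬ m ≤ 0)]
        rw [h0, mul_zero, if_neg (by omega)]
    | succ k =>
      rw [Finset.sum_range_succ, Finset.sum_range_succ,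
        Finset.sum_eq_zero (fun j hj => by
          have hj' := Finset.mem_range.mp hj
          have h1 : ¬ j + 1 = k + 1 := by omega
          have h2 : ¬ j = k + 1 := by omega
          simp [Fmat, h1, h2, hj'.ne])]
      have hF1 : Fmat (k + 1) k = -((fibo (k + 2) : ℝ) / fibo (k + 1)) := by
        simp [Fmat]
      have hF2 : Fmat (k + 1) (k + 1) = (fibo (k + 1) : ℝ) / fibo (k + 2) := by
        simp [Fmat]
      rw [hF1, hF2]
      rcases lt_trichotomy m (k + 1) with hm | rfl | hm
      · have hmk : m ≤ k := by omega
        have hmk1 : m ≤ k + 1 := by omega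
        simp only [Gmat, if_pos hmk, if_pos hmk1, if_neg (by omega : ¬ k + 1 = m)]
        have := fibo_ne m
        have := fibo_ne (m + 1)
        have := fibo_ne (k + 1)
        have := fibo_ne (k + 2)
        field_simp
        ring
      · simp only [Gmat, if_neg (by omega : ¬ k + 1 ≤ k), if_pos le_rfl, if_pos rfl, ↓reduceIte]
        have := fibo_ne (k + 1)
        have := fibo_ne (k + 2)
        field_simp
        ring
      · simp only [Gmat, if_neg (by omega : ¬ m ≤ k), if_neg (by omega : ¬ m ≤ k + 1),
          if_neg (by omega : ¬ k + 1 = m)]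
        ring
  · -- G * F
    rcases lt_trichotomy n m with hm | rfl | hm
    · rw [if_neg (by omega)]
      refine Finset.sum_eq_zero fun j hj => ?_
      have hj' := Finset.mem_range.mp hj
      have h1 : ¬ m + 1 = j := by omega
      have h2 : ¬ m = j := by omega
      simp [Fmat, h1, h2]
    · rw [if_pos rfl, Finset.sum_range_succ, Finset.sum_eq_zero (fun j hj => by
        have hj' := Finset.mem_range.mp hj
        have h1 : ¬ n + 1 = j := by omega
        have h2 : ¬ n = j := by omega
        simp [Fmat, h1, h2])]
      simp only [Gmat, if_pos le_rfl, Fmat, if_neg (by omega : ¬ n + 1 = n), if_pos rfl, ↓reduceIte]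
      have := fibo_ne n
      have := fibo_ne (n + 1)
      field_simp
      ring
    · rw [if_neg (by omega)]
      have hsub : ({m, m + 1} : Finset ℕ) ⊆ Finset.range (n + 1) := by
        intro j hj
        simp only [Finset.mem_insert, Finset.mem_singleton] at hj
        rcases hj with rfl | rfl <;> exact Finset.mem_range.mpr (by omega)
      rw [← Finset.sum_subset hsub (fun j hj hj' => by
        simp only [Finset.mem_insert, Finset.mem_singleton, not_or] at hj'
        have h1 : ¬ m + 1 = j := by omega
        have h2 : ¬ m = j := by omega
        simp [Fmat, h1, h2])]
      rw [Finset.sum_pair (by omega : m ≠ m + 1)]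
      simp only [Gmat, if_pos (by omega : m ≤ n), if_pos (by omega : m + 1 ≤ n), Fmat,
        if_neg (by omega : ¬ m + 1 = m), if_pos rfl, if_pos (rfl : m + 1 = m + 1), ↓reduceIte]
      have := fibo_ne m
      have := fibo_ne (m + 1)
      have := fibo_ne (m + 2)
      have := fibo_ne (n + 1)
      field_simp
      ring
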